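/- For a qubit, the distinguishability of the set of pure states {|ζ_x⟩}_{x=1}^N sampled from probability distribution {p_x} equals the distinguishability of the set of orthogonal complement states {|ζ_x^⊥⟩}_{x=1}^N sampled from the same distribution, where |ζ_x^⊥⟩ is the unique (up to phase) state orthogonal to |ζ_x⟩. -/

import Mathlib

open Matrix BigOperators ComplexOrder

private lemma complete2 (ζ ζp : Fin 2 → ℂ)
    (h1 : ∑ i, Complex.normSq (ζ i) = 1)
    (h2 : ∑ i, Complex.normSq (ζp i) = 1)
    (ho : ∑ i, (starRingEnd ℂ) (ζ i) * ζp i = 0) :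
    Matrix.vecMulVec ζ (star ζ) + Matrix.vecMulVec ζp (star ζp) = 1 := by
  have h1' : (starRingEnd ℂ) (ζ 0) * ζ 0 + (starRingEnd ℂ) (ζ 1) * ζ 1 = 1 := by
    have : (∑ i, (starRingEnd ℂ) (ζ i) * ζ i) = 1 := by
      rw [← Complex.ofReal_one, ← h1]
      push_cast
      refine Finset.sum_congr rfl fun i _ => ?_
      rw [mul_comm, Complex.mul_conj]
    simpa [Fin.sum_univ_two] using this
  have h2' : (starRingEnd ℂ) (ζp 0) * ζp 0 + (starRingEnd ℂ) (ζp 1) * ζp 1 = 1 := by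
    have : (∑ i, (starRingEnd ℂ) (ζp i) * ζp i) = 1 := by
      rw [← Complex.ofReal_one, ← h2]
      push_cast
      refine Finset.sum_congr rfl fun i _ => ?_
      rw [mul_comm, Complex.mul_conj]
    simpa [Fin.sum_univ_two] using this
  have ho1 : (starRingEnd ℂ) (ζ 0) * ζp 0 + (starRingEnd ℂ) (ζ 1) * ζp 1 = 0 := by
    simpa [Fin.sum_univ_two] using ho
  have ho2 : (starRingEnd ℂ) (ζp 0) * ζ 0 + (starRingEnd ℂ) (ζp 1) * ζ 1 = 0 := by
    have := congrArg (starRingEnd ℂ) ho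
    simpa [map_sum, Fin.sum_univ_two, mul_comm] using this
  set A : Matrix (Fin 2) (Fin 2) ℂ := Matrix.of ![star ζ, star ζp] with hA
  have hAAH : A * Aᴴ = 1 := by
    ext i j
    fin_cases i <;> fin_cases j <;>
      simp only [hA, Matrix.mul_apply, Fin.sum_univ_two, Matrix.one_apply,
        Matrix.conjTranspose_apply, Pi.star_apply, Matrix.of_apply] <;>
      simp <;>
      first
      | linear_combination h1' | linear_combination h2'
      | linear_combination ho1 | linear_combination ho2
  have hAHA : Aᴴ * A = 1 := mul_eq_one_comm.mp hAAH
  rw [← hAHA]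
  ext i j
  simp [Matrix.mul_apply, Fin.sum_univ_two, Matrix.conjTranspose_apply, hA,
    Matrix.vecMulVec_apply, mul_comm]

private def Ymat : Matrix (Fin 2) (Fin 2) ℂ := !![0, -1; 1, 0]

private lemma YHY : Ymatᴴ * Ymat = 1 := by
  ext i j
  fin_cases i <;> fin_cases j <;>
    simp [Ymat, Matrix.mul_apply, Fin.sum_univ_two, Matrix.one_apply, Matrix.conjTranspose_apply]

private lemma conjY (ζ : Fin 2 → ℂ) (h1 : ∑ i, Complex.normSq (ζ i) = 1) :
    Ymat * (Matrix.vecMulVec ζ (star ζ))ᵀ * Ymatᴴ = 1 - Matrix.vecMulVec ζ (star ζ) := by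
  have h1' : (starRingEnd ℂ) (ζ 0) * ζ 0 + (starRingEnd ℂ) (ζ 1) * ζ 1 = 1 := by
    have : (∑ i, (starRingEnd ℂ) (ζ i) * ζ i) = 1 := by
      rw [← Complex.ofReal_one, ← h1]
      push_cast
      refine Finset.sum_congr rfl fun i _ => ?_
      rw [mul_comm, Complex.mul_conj]
    simpa [Fin.sum_univ_two] using this
  ext i j
  fin_cases i <;> fin_cases j <;>
    simp [Ymat, Matrix.mul_apply, Fin.sum_univ_two, Matrix.one_apply,
      Matrix.conjTranspose_apply, Matrix.vecMulVec_apply, Matrix.transpose_apply,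
      Matrix.sub_apply, Matrix.vecMul, dotProduct] <;>
    simp only [mul_comm (ζ _) ((starRingEnd ℂ) _)] <;>
    first | linear_combination h1' | linear_combination -h1'

private lemma YYH : Ymat * Ymatᴴ = 1 := mul_eq_one_comm.mp YHY

private lemma subsetLem (N : ℕ) (ζ ζp : Fin N → Fin 2 → ℂ)
    (hζ : ∀ x, ∑ i, Complex.normSq (ζ x i) = 1)
    (hζp : ∀ x, ∑ i, Complex.normSq (ζp x i) = 1)
    (horth : ∀ x, ∑ i, (starRingEnd ℂ) (ζ x i) * ζp x i = 0)
    (p : Fin N → ℝ) :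
    {s : ℝ | ∃ M : Fin N → Matrix (Fin 2) (Fin 2) ℂ,
        (∀ x, (M x).PosSemidef) ∧ (∑ x, M x = 1) ∧
        s = ∑ x, p x * ((Matrix.vecMulVec (ζ x) (star (ζ x)) * M x).trace).re}
    ⊆ {s : ℝ | ∃ M : Fin N → Matrix (Fin 2) (Fin 2) ℂ,
        (∀ x, (M x).PosSemidef) ∧ (∑ x, M x = 1) ∧
        s = ∑ x, p x * ((Matrix.vecMulVec (ζp x) (star (ζp x)) * M x).trace).re} := by
  rintro s ⟨M, hMpos, hMsum, rfl⟩
  refine ⟨fun x => Ymat * (M x)ᵀ * Ymatᴴ, fun x => ((hMpos x).transpose).mul_mul_conjTranspose_same Ymat, ?_, ?_⟩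
  · have : ∑ x, Ymat * (M x)ᵀ * Ymatᴴ = Ymat * (∑ x, M x)ᵀ * Ymatᴴ := by
      rw [Matrix.transpose_sum, Matrix.mul_sum, Finset.sum_mul]
    rw [this, hMsum, Matrix.transpose_one, Matrix.mul_one, YYH]
  · refine Finset.sum_congr rfl fun x _ => ?_
    congr 2
    have hρp : Matrix.vecMulVec (ζp x) (star (ζp x))
        = Ymat * (Matrix.vecMulVec (ζ x) (star (ζ x)))ᵀ * Ymatᴴ := by
      rw [conjY _ (hζ x)]
      have h := complete2 (ζ x) (ζp x) (hζ x) (hζp x) (horth x)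
      rw [← h]; abel
    rw [hρp]
    have hassoc : Ymat * (Matrix.vecMulVec (ζ x) (star (ζ x)))ᵀ * Ymatᴴ * (Ymat * (M x)ᵀ * Ymatᴴ)
        = Ymat * ((Matrix.vecMulVec (ζ x) (star (ζ x)))ᵀ * (M x)ᵀ) * Ymatᴴ := by
      rw [show Ymat * (Matrix.vecMulVec (ζ x) (star (ζ x)))ᵀ * Ymatᴴ * (Ymat * (M x)ᵀ * Ymatᴴ)
          = Ymat * (Matrix.vecMulVec (ζ x) (star (ζ x)))ᵀ * (Ymatᴴ * Ymat) * (M x)ᵀ * Ymatᴴ by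
        simp only [Matrix.mul_assoc]]
      rw [YHY, Matrix.mul_one]; simp only [Matrix.mul_assoc]
    rw [hassoc, Matrix.trace_mul_cycle, YHY, Matrix.one_mul, ← Matrix.transpose_mul,
      Matrix.trace_transpose, Matrix.trace_mul_comm]

/-- For a qubit, the distinguishability (supremum over POVMs of the average guessing
probability) of the pure states `{|ζ_x⟩}` with prior `{p_x}` equals that of the
orthogonal-complement states `{|ζ_x^⊥⟩}` with the same prior. -/
theorem stmt2 (N : ℕ) (hN : 0 < N)
    (ζ ζp : Fin N → Fin 2 → ℂ)
    (hζ : ∀ x, ∑ i, Complex.normSq (ζ x i) = 1)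
    (hζp : ∀ x, ∑ i, Complex.normSq (ζp x i) = 1)
    (horth : ∀ x, ∑ i, (starRingEnd ℂ) (ζ x i) * ζp x i = 0)
    (p : Fin N → ℝ) (hp : ∀ x, 0 ≤ p x) (hp1 : ∑ x, p x = 1) :
    sSup {s : ℝ | ∃ M : Fin N → Matrix (Fin 2) (Fin 2) ℂ,
        (∀ x, (M x).PosSemidef) ∧ (∑ x, M x = 1) ∧
        s = ∑ x, p x * ((Matrix.vecMulVec (ζ x) (star (ζ x)) * M x).trace).re}
    = sSup {s : ℝ | ∃ M : Fin N → Matrix (Fin 2) (Fin 2) ℂ,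
        (∀ x, (M x).PosSemidef) ∧ (∑ x, M x = 1) ∧
        s = ∑ x, p x * ((Matrix.vecMulVec (ζp x) (star (ζp x)) * M x).trace).re} := by
  have horth' : ∀ x, ∑ i, (starRingEnd ℂ) (ζp x i) * ζ x i = 0 := fun x => by
    have := congrArg (starRingEnd ℂ) (horth x)
    simpa [map_sum, mul_comm] using this
  rw [Set.Subset.antisymm (subsetLem N ζ ζp hζ hζp horth p) (subsetLem N ζp ζ hζp hζ horth' p)]
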